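/- Assume H1, H2 and that b := lim_{z→∞} q'(z)·∫_z^∞ dx/q(x) exists in ℝ. Then b ≥ 0 and lim_{z→∞} (∫_z^∞ q(x)^{-1} dx)/(q(z)² ∫_z^∞ q(x)^{-3} dx) = 2b + 1. -/

import Mathlib

open MeasureTheory Real Filter

lemma tail_split {f : ℝ → ℝ} {a w : ℝ} (hw : a ≤ w) (hint : IntegrableOn f (Set.Ioi a)) :
    ∫ x in Set.Ioi w, f x = (∫ x in Set.Ioi a, f x) - ∫ x in a..w, f x := by
  have h1 : Set.Ioc a w ∪ Set.Ioi w = Set.Ioi a := Set.Ioc_union_Ioi_eq_Ioi hw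
  have h2 : ∫ x in Set.Ioi a, f x = (∫ x in Set.Ioc a w, f x) + ∫ x in Set.Ioi w, f x := by
    rw [← h1]
    exact setIntegral_union (Set.Ioc_disjoint_Ioi le_rfl) measurableSet_Ioi
      (hint.mono_set (by rw [← h1]; exact Set.subset_union_left))
      (hint.mono_set (by rw [← h1]; exact Set.subset_union_right))
  rw [intervalIntegral.integral_of_le hw, h2]; ring

lemma tail_tendsto_zero {f : ℝ → ℝ} {a : ℝ} (hint : IntegrableOn f (Set.Ioi a)) :
    Tendsto (fun w => ∫ x in Set.Ioi w, f x) atTop (nhds 0) := by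
  have h := intervalIntegral_tendsto_integral_Ioi a hint tendsto_id
  have h' : Tendsto (fun w => (∫ x in Set.Ioi a, f x) - ∫ x in a..w, f x) atTop
      (nhds ((∫ x in Set.Ioi a, f x) - ∫ x in Set.Ioi a, f x)) := tendsto_const_nhds.sub h
  rw [sub_self] at h'
  apply h'.congr'
  filter_upwards [eventually_ge_atTop a] with w hw
  rw [tail_split hw hint]

lemma tail_hasDerivAt {f : ℝ → ℝ} {a z : ℝ} (hz : a < z) (hint : IntegrableOn f (Set.Ioi a))
    (hcont : ContinuousAt f z) :
    HasDerivAt (fun w => ∫ x in Set.Ioi w, f x) (-(f z)) z := by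
  have hsub : Set.uIoc a z ⊆ Set.Ioi a := by
    rw [Set.uIoc_of_le hz.le]; exact Set.Ioc_subset_Ioi_self
  have h2 : HasDerivAt (fun w => ∫ x in a..w, f x) (f z) z :=
    intervalIntegral.integral_hasDerivAt_right (intervalIntegrable_iff.2 (hint.mono_set hsub))
      ⟨Set.Ioi a, Ioi_mem_nhds hz, hint.aestronglyMeasurable⟩ hcont
  have h : HasDerivAt (fun w => (∫ x in Set.Ioi a, f x) - ∫ x in a..w, f x) (0 - f z) z :=
    (hasDerivAt_const z (∫ x in Set.Ioi a, f x)).sub h2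
  rw [zero_sub] at h
  apply h.congr_of_eventuallyEq
  filter_upwards [Ioi_mem_nhds hz] with w hw
  exact tail_split (le_of_lt hw) hint

lemma qgrowth {q : ℝ → ℝ} {a : ℝ} (hq : ContDiff ℝ 1 q)
    (hq1 : ∀ x, a ≤ x → 1 ≤ q x)
    (hq' : ∀ x, a ≤ x → |deriv q x| ≤ q x ^ 2 / 2)
    {u v : ℝ} (hu : a ≤ u) (huv : u ≤ v) (hv : v ≤ u + 1 / (2 * q u)) :
    q v ≤ 4 / 3 * q u := by
  have hqpos : ∀ x, a ≤ x → 0 < q x := fun x hx => lt_of_lt_of_le one_pos (hq1 x hx)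
  have hder : ∀ x ∈ Set.Ici a, HasDerivWithinAt (fun x => (q x)⁻¹)
      (-(deriv q x) / q x ^ 2) (Set.Ici a) x := fun x hx =>
    (((hq.differentiable one_ne_zero).differentiableAt.hasDerivAt).inv
      (ne_of_gt (hqpos x hx))).hasDerivWithinAt
  have hbound : ∀ x ∈ Set.Ici a, ‖-(deriv q x) / q x ^ 2‖ ≤ 1 / 2 := by
    intro x hx
    have h2 : (0:ℝ) < q x ^ 2 := pow_pos (hqpos x hx) 2
    rw [norm_div, norm_neg, Real.norm_eq_abs, Real.norm_eq_abs, abs_of_pos h2,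
      div_le_iff₀ h2]
    calc |deriv q x| ≤ q x ^ 2 / 2 := hq' x hx
      _ = 1 / 2 * q x ^ 2 := by ring
  have hlip := (convex_Ici a).norm_image_sub_le_of_norm_hasDerivWithin_le hder hbound
    (Set.mem_Ici.2 hu) (Set.mem_Ici.2 (le_trans hu huv))
  -- hlip : ‖(q v)⁻¹ - (q u)⁻¹‖ ≤ 1/2 * ‖v - u‖
  have hqu := hqpos u hu
  have hqv := hqpos v (le_trans hu huv)
  have hvu : v - u ≤ 1 / (2 * q u) := by linarith
  have h3 : (q u)⁻¹ - (q v)⁻¹ ≤ 1 / (4 * q u) := by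
    have := (abs_le.1 (by rwa [Real.norm_eq_abs, Real.norm_eq_abs, abs_of_nonneg (by linarith : (0:ℝ) ≤ v - u)] at hlip)).2
    have h4 : (q u)⁻¹ - (q v)⁻¹ ≤ 1 / 2 * (v - u) := by
      have := (abs_le.1 (by rwa [Real.norm_eq_abs, Real.norm_eq_abs, abs_of_nonneg (by linarith : (0:ℝ) ≤ v - u)] at hlip)).1
      linarith
    calc (q u)⁻¹ - (q v)⁻¹ ≤ 1 / 2 * (v - u) := h4
      _ ≤ 1 / 2 * (1 / (2 * q u)) := by
          apply mul_le_mul_of_nonneg_left hvu; norm_num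
      _ = 1 / (4 * q u) := by field_simp; ring
  have h5 : 3 / 4 * (q u)⁻¹ ≤ (q v)⁻¹ := by
    have : 1 / (4 * q u) = 1 / 4 * (q u)⁻¹ := by field_simp
    rw [this] at h3; linarith
  have h6 : (0:ℝ) < 3 / 4 * (q u)⁻¹ := by positivity
  have h7 := inv_anti₀ h6 h5
  rw [inv_inv] at h7
  calc q v ≤ (3 / 4 * (q u)⁻¹)⁻¹ := h7
    _ = 4 / 3 * q u := by field_simp

lemma gamma_bound {q γ : ℝ → ℝ} {a : ℝ} (hq : ContDiff ℝ 1 q)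
    (hγ : ∀ y, γ y = 2 * ∫ t in (0:ℝ)..y, q t)
    (hq1 : ∀ x, a ≤ x → 1 ≤ q x)
    (hq' : ∀ x, a ≤ x → |deriv q x| ≤ q x ^ 2 / 2)
    {y z : ℝ} (hy : a ≤ y) (hyz : y ≤ z) (hz : z ≤ y + 1 / (2 * q y)) :
    γ z ≤ γ y + 4 / 3 := by
  have hqpos : (0:ℝ) < q y := lt_of_lt_of_le one_pos (hq1 y hy)
  have hint : ∀ u v : ℝ, IntervalIntegrable q volume u v :=
    fun u v => (hq.continuous.intervalIntegrable u v)
  have hsplit : γ z - γ y = 2 * ∫ t in y..z, q t := by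
    rw [hγ, hγ, ← mul_sub]
    congr 1
    rw [← intervalIntegral.integral_add_adjacent_intervals (hint 0 y) (hint y z)]
    ring
  have hmono : ∫ t in y..z, q t ≤ ∫ t in y..z, (4 / 3 * q y) := by
    apply intervalIntegral.integral_mono_on hyz (hint y z) (intervalIntegrable_const)
    intro x hx
    exact qgrowth hq hq1 hq' hy hx.1 (le_trans hx.2 hz)
  rw [intervalIntegral.integral_const, smul_eq_mul] at hmono
  have h2 : (z - y) * (4 / 3 * q y) ≤ 1 / (2 * q y) * (4 / 3 * q y) := by
    apply mul_le_mul_of_nonneg_right (by linarith) (by positivity)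
  have h3 : 1 / (2 * q y) * (4 / 3 * q y) = 2 / 3 := by field_simp; ring
  linarith

lemma integrable_one_div {q γ : ℝ → ℝ} (hq : ContDiff ℝ 1 q)
    (hγ : ∀ y, γ y = 2 * ∫ t in (0:ℝ)..y, q t)
    (H1 : ∫⁻ y in Set.Ioi (0:ℝ),
        ENNReal.ofReal (Real.exp (γ y)) *
          ∫⁻ z in Set.Ioi y, ENNReal.ofReal (Real.exp (-(γ z))) < ⊤)
    {a : ℝ} (ha : 0 < a)
    (hq1 : ∀ x, a ≤ x → 1 ≤ q x)
    (hq' : ∀ x, a ≤ x → |deriv q x| ≤ q x ^ 2 / 2) :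
    IntegrableOn (fun x => 1 / q x) (Set.Ioi a) := by
  have hqpos : ∀ x, a ≤ x → 0 < q x := fun x hx => lt_of_lt_of_le one_pos (hq1 x hx)
  set c : ℝ := Real.exp (-(4/3 : ℝ)) / 2 with hc
  have hcpos : 0 < c := by positivity
  have key : ∀ y, a ≤ y → ENNReal.ofReal c * ENNReal.ofReal (1 / q y) ≤
      ENNReal.ofReal (Real.exp (γ y)) *
        ∫⁻ z in Set.Ioi y, ENNReal.ofReal (Real.exp (-(γ z))) := by
    intro y hy
    have hqy := hqpos y hy
    set δ : ℝ := 1 / (2 * q y) with hδ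
    have hδpos : 0 < δ := by positivity
    have hinner : ENNReal.ofReal (Real.exp (-(γ y) - 4/3)) * ENNReal.ofReal δ ≤
        ∫⁻ z in Set.Ioi y, ENNReal.ofReal (Real.exp (-(γ z))) := by
      have h1 : ∫⁻ z in Set.Ioc y (y + δ), ENNReal.ofReal (Real.exp (-(γ y) - 4/3)) ≤
          ∫⁻ z in Set.Ioc y (y + δ), ENNReal.ofReal (Real.exp (-(γ z))) := by
        apply lintegral_mono_ae
        rw [ae_restrict_iff' measurableSet_Ioc]
        filter_upwards with z hz
        apply ENNReal.ofReal_le_ofReal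
        apply Real.exp_le_exp.2
        have := gamma_bound hq hγ hq1 hq' hy (le_of_lt hz.1) hz.2
        linarith
      have h2 : ∫⁻ z in Set.Ioc y (y + δ), ENNReal.ofReal (Real.exp (-(γ y) - 4/3)) =
          ENNReal.ofReal (Real.exp (-(γ y) - 4/3)) * ENNReal.ofReal δ := by
        rw [setLIntegral_const, Real.volume_Ioc]
        congr 1
        ring_nf
      calc ENNReal.ofReal (Real.exp (-(γ y) - 4/3)) * ENNReal.ofReal δ
          = ∫⁻ z in Set.Ioc y (y + δ), ENNReal.ofReal (Real.exp (-(γ y) - 4/3)) := h2.symm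
        _ ≤ ∫⁻ z in Set.Ioc y (y + δ), ENNReal.ofReal (Real.exp (-(γ z))) := h1
        _ ≤ ∫⁻ z in Set.Ioi y, ENNReal.ofReal (Real.exp (-(γ z))) :=
            lintegral_mono_set Set.Ioc_subset_Ioi_self
    calc ENNReal.ofReal c * ENNReal.ofReal (1 / q y)
        = ENNReal.ofReal (Real.exp (γ y)) *
            (ENNReal.ofReal (Real.exp (-(γ y) - 4/3)) * ENNReal.ofReal δ) := by
          rw [← ENNReal.ofReal_mul (le_of_lt (Real.exp_pos _)),
            ← ENNReal.ofReal_mul (le_of_lt (Real.exp_pos _)),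
            ← ENNReal.ofReal_mul (le_of_lt hcpos)]
          have hee : Real.exp (γ y) * Real.exp (-(γ y) - 4 / 3) = Real.exp (-(4/3:ℝ)) := by
            rw [← Real.exp_add]; congr 1; ring
          rw [← mul_assoc, hee, hc, hδ]
          field_simp
      _ ≤ ENNReal.ofReal (Real.exp (γ y)) *
            ∫⁻ z in Set.Ioi y, ENNReal.ofReal (Real.exp (-(γ z))) :=
          mul_le_mul_right hinner _
  have hfin : ∫⁻ y in Set.Ioi a, ENNReal.ofReal c * ENNReal.ofReal (1 / q y) < ⊤ := by
    calc ∫⁻ y in Set.Ioi a, ENNReal.ofReal c * ENNReal.ofReal (1 / q y)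
        ≤ ∫⁻ y in Set.Ioi a, ENNReal.ofReal (Real.exp (γ y)) *
            ∫⁻ z in Set.Ioi y, ENNReal.ofReal (Real.exp (-(γ z))) := by
          apply lintegral_mono_ae
          rw [ae_restrict_iff' measurableSet_Ioi]
          filter_upwards with y hy
          exact key y (le_of_lt hy)
      _ ≤ ∫⁻ y in Set.Ioi (0:ℝ), ENNReal.ofReal (Real.exp (γ y)) *
            ∫⁻ z in Set.Ioi y, ENNReal.ofReal (Real.exp (-(γ z))) :=
          lintegral_mono_set (Set.Ioi_subset_Ioi (le_of_lt ha))
      _ < ⊤ := H1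
  rw [lintegral_const_mul' _ _ ENNReal.ofReal_ne_top] at hfin
  have hfin2 : ∫⁻ y in Set.Ioi a, ENNReal.ofReal (1 / q y) < ⊤ := by
    by_contra h
    rw [not_lt, top_le_iff] at h
    rw [h, ENNReal.mul_top (by simp [ENNReal.ofReal_eq_zero]; linarith)] at hfin
    exact (lt_irrefl ⊤) hfin
  have hmeas : AEStronglyMeasurable (fun x => 1 / q x) (volume.restrict (Set.Ioi a)) := by
    apply Measurable.aestronglyMeasurable
    simpa [one_div] using hq.continuous.measurable
  have hnn : 0 ≤ᵐ[volume.restrict (Set.Ioi a)] fun x => 1 / q x := by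
    filter_upwards [ae_restrict_mem measurableSet_Ioi] with x hx
    have := hqpos x (le_of_lt hx)
    positivity
  exact ⟨hmeas, (hasFiniteIntegral_iff_ofReal hnn).2 hfin2⟩



/-- Under H1, H2 and b = lim q'(z)·∫_z^∞ dx/q(x) ∈ ℝ, one has b ≥ 0 and
(∫_z^∞ q⁻¹)/(q(z)² ∫_z^∞ q⁻³) → 2b + 1. -/
theorem sigma_eq_two_b_add_one
    (q γ : ℝ → ℝ) (b : ℝ)
    (hq : ContDiff ℝ 1 q)
    (hγ : ∀ y, γ y = 2 * ∫ t in (0:ℝ)..y, q t)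
    (H1 : ∫⁻ y in Set.Ioi (0:ℝ),
        ENNReal.ofReal (Real.exp (γ y)) *
          ∫⁻ z in Set.Ioi y, ENNReal.ofReal (Real.exp (-(γ z))) < ⊤)
    (H2a : Tendsto q atTop atTop)
    (H2b : Tendsto (fun x => deriv q x / q x ^ 2) atTop (nhds 0))
    (hb : Tendsto (fun z => deriv q z * ∫ x in Set.Ioi z, 1 / q x)
        atTop (nhds b)) :
    0 ≤ b ∧
      Tendsto
        (fun z =>
          (∫ x in Set.Ioi z, 1 / q x) /
            (q z ^ 2 * ∫ x in Set.Ioi z, 1 / q x ^ 3))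
        atTop (nhds (2 * b + 1)) := by
  -- Step 0: choose a threshold a
  have hev : ∀ᶠ x in atTop, 1 ≤ q x ∧ |deriv q x / q x ^ 2| ≤ 1 / 2 := by
    have h1 : ∀ᶠ x in atTop, 1 ≤ q x := H2a.eventually_ge_atTop 1
    have h2 : ∀ᶠ x in atTop, dist (deriv q x / q x ^ 2) 0 < 1 / 2 :=
      (Metric.tendsto_nhds.1 H2b) (1/2) (by norm_num)
    filter_upwards [h1, h2] with x hx1 hx2
    rw [Real.dist_eq, sub_zero] at hx2
    exact ⟨hx1, le_of_lt hx2⟩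
  obtain ⟨a₀, ha₀⟩ := eventually_atTop.1 hev
  set a : ℝ := max a₀ 1 with hadef
  have ha : 0 < a := lt_of_lt_of_le one_pos (le_max_right _ _)
  have hq1 : ∀ x, a ≤ x → 1 ≤ q x := fun x hx => (ha₀ x (le_trans (le_max_left _ _) hx)).1
  have hqpos : ∀ x, a ≤ x → 0 < q x := fun x hx => lt_of_lt_of_le one_pos (hq1 x hx)
  have hq' : ∀ x, a ≤ x → |deriv q x| ≤ q x ^ 2 / 2 := by
    intro x hx
    have h2 := (ha₀ x (le_trans (le_max_left _ _) hx)).2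
    have hq2 : (0:ℝ) < q x ^ 2 := pow_pos (hqpos x hx) 2
    rw [abs_div, abs_of_pos hq2, div_le_iff₀ hq2] at h2
    calc |deriv q x| ≤ 1 / 2 * q x ^ 2 := h2
      _ = q x ^ 2 / 2 := by ring
  -- notation
  set M : ℝ → ℝ := fun z => ∫ x in Set.Ioi z, 1 / q x with hMdef
  set N : ℝ → ℝ := fun z => ∫ x in Set.Ioi z, 1 / q x ^ 3 with hNdef
  set g : ℝ → ℝ := fun x => deriv q x / q x ^ 3 * M x with hgdef
  set E : ℝ → ℝ := fun z => ∫ x in Set.Ioi z, g x with hEdef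
  -- integrabilities
  have hM1 : IntegrableOn (fun x => 1 / q x) (Set.Ioi a) :=
    integrable_one_div hq hγ H1 ha hq1 hq'
  have hN1 : IntegrableOn (fun x => 1 / q x ^ 3) (Set.Ioi a) := by
    apply MeasureTheory.Integrable.mono hM1
    · apply Measurable.aestronglyMeasurable
      have : Measurable fun x => (q x ^ 3)⁻¹ := (hq.continuous.measurable.pow_const 3).inv
      simpa [one_div] using this
    · filter_upwards [ae_restrict_mem measurableSet_Ioi] with x hx
      have h1 := hq1 x (le_of_lt hx)
      have hp : (0:ℝ) < q x := by linarith
      rw [Real.norm_eq_abs, Real.norm_eq_abs, abs_of_pos (by positivity),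
        abs_of_pos (by positivity)]
      apply one_div_le_one_div_of_le hp
      calc q x = q x * 1 * 1 := by ring
        _ ≤ q x * q x * q x := by
            apply mul_le_mul (mul_le_mul le_rfl h1 one_pos.le hp.le) h1 one_pos.le
            positivity
        _ = q x ^ 3 := by ring
  -- basic positivity / monotonicity facts
  have hf1nn : ∀ z, a ≤ z → ∀ x ∈ Set.Ioi z, (0:ℝ) ≤ 1 / q x := by
    intro z hz x hx
    have := hqpos x (le_trans hz (le_of_lt hx))
    positivity
  have hf3nn : ∀ z, a ≤ z → ∀ x ∈ Set.Ioi z, (0:ℝ) ≤ 1 / q x ^ 3 := by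
    intro z hz x hx
    have := hqpos x (le_trans hz (le_of_lt hx))
    positivity
  have hMnn : ∀ z, a ≤ z → 0 ≤ M z := fun z hz =>
    setIntegral_nonneg measurableSet_Ioi (hf1nn z hz)
  have hNnn : ∀ z, a ≤ z → 0 ≤ N z := fun z hz =>
    setIntegral_nonneg measurableSet_Ioi (hf3nn z hz)
  have hMmono : ∀ z, a ≤ z → M z ≤ M a := by
    intro z hz
    apply setIntegral_mono_set hM1
    · filter_upwards [ae_restrict_mem measurableSet_Ioi] with x hx
      exact hf1nn a le_rfl x hx
    · exact (Set.Ioi_subset_Ioi hz).eventuallyLE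
  have hNpos : ∀ z, a ≤ z → 0 < N z := by
    intro z hz
    have hae : 0 ≤ᵐ[volume.restrict (Set.Ioi z)] fun x => 1 / q x ^ 3 := by
      filter_upwards [ae_restrict_mem measurableSet_Ioi] with x hx
      exact hf3nn z hz x hx
    rw [setIntegral_pos_iff_support_of_nonneg_ae hae (hN1.mono (Set.Ioi_subset_Ioi hz) le_rfl)]
    have hsub : Set.Ioi z ⊆ Function.support (fun x => 1 / q x ^ 3) ∩ Set.Ioi z := by
      intro x hx
      refine ⟨?_, hx⟩
      have := hqpos x (le_trans hz (le_of_lt hx))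
      simp only [Function.mem_support]
      exact ne_of_gt (by positivity)
    calc (0:ENNReal) < volume (Set.Ioi z) := by simp
      _ ≤ volume (Function.support (fun x => 1 / q x ^ 3) ∩ Set.Ioi z) :=
          measure_mono hsub
  -- continuity and integrability of g
  have hqd : ∀ x : ℝ, HasDerivAt q (deriv q x) x := fun x =>
    ((hq.differentiable one_ne_zero) x).hasDerivAt
  have hq'cont : Continuous (deriv q) := hq.continuous_deriv le_rfl
  have hMd : ∀ z, a < z → HasDerivAt M (-(1 / q z)) z := by
    intro z hz
    exact tail_hasDerivAt hz hM1
      (continuousAt_const.div hq.continuous.continuousAt (ne_of_gt (hqpos z hz.le)))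
  have hNd : ∀ z, a < z → HasDerivAt N (-(1 / q z ^ 3)) z := by
    intro z hz
    exact tail_hasDerivAt hz hN1
      (continuousAt_const.div (hq.continuous.continuousAt.pow 3)
        (by have := hqpos z hz.le; positivity))
  have hgcont : ∀ z, a < z → ContinuousAt g z := by
    intro z hz
    have h3 : (0:ℝ) < q z ^ 3 := by have := hqpos z hz.le; positivity
    exact ((hq'cont.continuousAt.div (hq.continuous.continuousAt.pow 3)
      (ne_of_gt h3)).mul (hMd z hz).continuousAt)
  have hg1 : IntegrableOn g (Set.Ioi a) := by
    apply MeasureTheory.Integrable.mono (hM1.const_mul (M a / 2))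
    · apply ContinuousOn.aestronglyMeasurable _ measurableSet_Ioi
      intro z hz
      exact (hgcont z hz).continuousWithinAt
    · filter_upwards [ae_restrict_mem measurableSet_Ioi] with x hx
      have hx' : a ≤ x := le_of_lt hx
      have hp := hqpos x hx'
      have hMa : 0 ≤ M a := hMnn a le_rfl
      have hMx0 : 0 ≤ M x := hMnn x hx'
      have hMx : M x ≤ M a := hMmono x hx'
      rw [Real.norm_eq_abs, Real.norm_eq_abs, hgdef]
      simp only []
      rw [abs_mul, abs_div, abs_of_nonneg hMx0, abs_of_pos (by positivity : (0:ℝ) < q x ^ 3)]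
      have h1 : |deriv q x| / q x ^ 3 ≤ 1 / (2 * q x) := by
        rw [div_le_div_iff₀ (by positivity) (by positivity)]
        calc |deriv q x| * (2 * q x) ≤ q x ^ 2 / 2 * (2 * q x) :=
            mul_le_mul_of_nonneg_right (hq' x hx') (by positivity)
          _ = 1 * q x ^ 3 := by ring
      calc |deriv q x| / q x ^ 3 * M x ≤ 1 / (2 * q x) * M a := by
            apply mul_le_mul h1 hMx hMx0 (by positivity)
        _ = M a / 2 * (1 / q x) := by ring
        _ ≤ |M a / 2 * (1 / q x)| := le_abs_self _
  -- derivative of E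
  have hEd : ∀ z, a < z → HasDerivAt E (-(g z)) z := fun z hz =>
    tail_hasDerivAt hz hg1 (hgcont z hz)
  -- the function G
  set G : ℝ → ℝ := fun z => N z - M z / q z ^ 2 + 2 * E z with hGdef
  have hGd : ∀ z, a < z → HasDerivAt G 0 z := by
    intro z hz
    have hqz := hqpos z hz.le
    have hq2 : q z ^ 2 ≠ 0 := by positivity
    have hdiv : HasDerivAt (fun w => M w / q w ^ 2)
        ((-(1 / q z) * q z ^ 2 - M z * (2 * q z ^ 1 * deriv q z)) / (q z ^ 2) ^ 2) z :=
      (hMd z hz).div ((hqd z).pow 2) hq2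
    have h := ((hNd z hz).sub hdiv).add ((hEd z hz).const_mul 2)
    refine h.congr_deriv ?_
    rw [hgdef]
    simp only []
    field_simp
    ring
  have hGconst : ∀ z w, a < z → z ≤ w → G w = G z := by
    intro z w hz hzw
    have h := constant_of_has_deriv_right_zero (f := G) (a := z) (b := w) ?_ ?_
    · exact h w (Set.right_mem_Icc.2 hzw)
    · intro x hx
      exact ((hGd x (lt_of_lt_of_le hz hx.1)).continuousAt).continuousWithinAt
    · intro x hx
      exact ((hGd x (lt_of_lt_of_le hz hx.1)).hasDerivWithinAt)
  have hGlim : Tendsto G atTop (nhds 0) := by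
    have hN0 : Tendsto N atTop (nhds 0) := tail_tendsto_zero hN1
    have hM0 : Tendsto M atTop (nhds 0) := tail_tendsto_zero hM1
    have hq2top : Tendsto (fun z => q z ^ 2) atTop atTop := by
      have := (tendsto_pow_atTop (two_ne_zero)).comp H2a
      exact this
    have hMq : Tendsto (fun z => M z / q z ^ 2) atTop (nhds 0) := by
      have := hM0.mul hq2top.inv_tendsto_atTop
      rw [mul_zero] at this
      apply this.congr
      intro z
      simp [div_eq_mul_inv]
    have hE0 : Tendsto E atTop (nhds 0) := by
      have htend : Tendsto (fun z => M a / 2 * M z) atTop (nhds 0) := by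
        have := hM0.const_mul (M a / 2)
        rwa [mul_zero] at this
      refine squeeze_zero_norm' ?_ htend
      · filter_upwards [eventually_ge_atTop a] with z hz
        have hbound : ∀ᵐ x ∂(volume.restrict (Set.Ioi z)), ‖g x‖ ≤ M a / 2 * (1 / q x) := by
          filter_upwards [ae_restrict_mem measurableSet_Ioi] with x hx
          have hx' : a ≤ x := le_trans hz (le_of_lt hx)
          have hp := hqpos x hx'
          have hMa : 0 ≤ M a := hMnn a le_rfl
          have hMx0 : 0 ≤ M x := hMnn x hx'
          have hMx : M x ≤ M a := hMmono x hx'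
          rw [Real.norm_eq_abs, hgdef]
          simp only []
          rw [abs_mul, abs_div, abs_of_nonneg hMx0,
            abs_of_pos (by positivity : (0:ℝ) < q x ^ 3)]
          have h1 : |deriv q x| / q x ^ 3 ≤ 1 / (2 * q x) := by
            rw [div_le_div_iff₀ (by positivity) (by positivity)]
            calc |deriv q x| * (2 * q x) ≤ q x ^ 2 / 2 * (2 * q x) :=
                mul_le_mul_of_nonneg_right (hq' x hx') (by positivity)
              _ = 1 * q x ^ 3 := by ring
          calc |deriv q x| / q x ^ 3 * M x ≤ 1 / (2 * q x) * M a :=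
              mul_le_mul h1 hMx hMx0 (by positivity)
            _ = M a / 2 * (1 / q x) := by ring
        calc ‖E z‖ ≤ ∫ x in Set.Ioi z, M a / 2 * (1 / q x) :=
            norm_integral_le_of_norm_le ((hM1.mono (Set.Ioi_subset_Ioi hz) le_rfl).const_mul _) hbound
          _ = M a / 2 * M z := integral_const_mul _ _
    have h := (hN0.sub hMq).add (hE0.const_mul (2:ℝ))
    rw [sub_zero, mul_zero, add_zero] at h
    exact h
  have hGzero : ∀ z, a < z → G z = 0 := by
    intro z hz
    have h1 : Tendsto G atTop (nhds (G z)) := by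
      have : Tendsto (fun _ : ℝ => G z) atTop (nhds (G z)) := tendsto_const_nhds
      apply this.congr'
      filter_upwards [eventually_ge_atTop z] with w hw
      exact (hGconst z w hz hw).symm
    exact tendsto_nhds_unique h1 hGlim
  have hId : ∀ z, a < z → M z = q z ^ 2 * (N z + 2 * E z) := by
    intro z hz
    have h0 := hGzero z hz
    rw [hGdef] at h0
    simp only [] at h0
    have hq2 : q z ^ 2 ≠ 0 := by have := hqpos z hz.le; positivity
    have h1 : M z / q z ^ 2 = N z + 2 * E z := by linarith
    rw [div_eq_iff hq2] at h1
    rw [h1]; ring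
  -- E/N tends to b
  have hEN : Tendsto (fun z => E z / N z) atTop (nhds b) := by
    rw [Metric.tendsto_atTop]
    intro ε hε
    obtain ⟨z₀, hz₀⟩ := (Metric.tendsto_atTop.1 hb) (ε / 2) (by linarith)
    refine ⟨max z₀ a, fun z hz => ?_⟩
    have hza : a ≤ z := le_trans (le_max_right _ _) hz
    have hzz₀ : z₀ ≤ z := le_trans (le_max_left _ _) hz
    have hNz := hNpos z hza
    have hN3 : IntegrableOn (fun x => 1 / q x ^ 3) (Set.Ioi z) :=
      hN1.mono (Set.Ioi_subset_Ioi hza) le_rfl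
    have hgz : IntegrableOn g (Set.Ioi z) := hg1.mono (Set.Ioi_subset_Ioi hza) le_rfl
    have hsub : E z - b * N z = ∫ x in Set.Ioi z, (g x - b * (1 / q x ^ 3)) := by
      rw [integral_sub hgz (hN3.const_mul b), integral_const_mul]
    have hbound : |E z - b * N z| ≤ ε / 2 * N z := by
      rw [hsub, ← Real.norm_eq_abs]
      calc ‖∫ x in Set.Ioi z, (g x - b * (1 / q x ^ 3))‖
          ≤ ∫ x in Set.Ioi z, ε / 2 * (1 / q x ^ 3) := by
            apply norm_integral_le_of_norm_le (hN3.const_mul _)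
            filter_upwards [ae_restrict_mem measurableSet_Ioi] with x hx
            have hx' : a ≤ x := le_trans hza (le_of_lt hx)
            have hp := hqpos x hx'
            have hd := hz₀ x (le_trans hzz₀ (le_of_lt hx))
            rw [Real.dist_eq] at hd
            have heq : g x - b * (1 / q x ^ 3) = (deriv q x * M x - b) / q x ^ 3 := by
              rw [hgdef]
              simp only []
              field_simp
            rw [heq, Real.norm_eq_abs, abs_div, abs_of_pos (by positivity : (0:ℝ) < q x ^ 3)]
            rw [div_le_iff₀ (by positivity)]
            calc |deriv q x * M x - b| ≤ ε / 2 := le_of_lt hd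
              _ = ε / 2 * (1 / q x ^ 3) * q x ^ 3 := by
                  field_simp
          _ = ε / 2 * N z := integral_const_mul _ _
    rw [Real.dist_eq]
    have heq2 : E z / N z - b = (E z - b * N z) / N z := by
      field_simp
    rw [heq2, abs_div, abs_of_pos hNz, div_lt_iff₀ hNz]
    calc |E z - b * N z| ≤ ε / 2 * N z := hbound
      _ < ε * N z := by
          apply mul_lt_mul_of_pos_right _ hNz
          linarith
  -- b ≥ 0
  have hbge : 0 ≤ b := by
    by_contra hb0
    push_neg at hb0
    have hev2 : ∀ᶠ z in atTop, deriv q z * M z < 0 := by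
      have h := (Metric.tendsto_atTop.1 hb) (-b) (by linarith)
      obtain ⟨z₀, hz₀⟩ := h
      rw [eventually_atTop]
      refine ⟨z₀, fun z hz => ?_⟩
      have := hz₀ z hz
      rw [Real.dist_eq] at this
      have h2 := (abs_lt.1 this).2
      linarith
    obtain ⟨c, hc⟩ := eventually_atTop.1 (hev2.and (eventually_ge_atTop a))
    have hderivneg : ∀ x, c ≤ x → deriv q x < 0 := by
      intro x hx
      by_contra hd
      push_neg at hd
      have := (hc x hx).1
      have hMx := hMnn x (hc x hx).2
      nlinarith
    have hanti : StrictAntiOn q (Set.Ici c) := by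
      apply strictAntiOn_of_deriv_neg (convex_Ici c) (hq.continuous.continuousOn)
      intro x hx
      rw [interior_Ici] at hx
      exact hderivneg x (le_of_lt hx)
    obtain ⟨x, hx1, hx2⟩ := ((H2a.eventually_gt_atTop (q c)).and (eventually_ge_atTop (c + 1))).exists
    have : q x < q c := hanti (Set.self_mem_Ici) (by simp; linarith) (by linarith)
    linarith
  refine ⟨hbge, ?_⟩
  -- final assembly
  have hfinal : Tendsto (fun z => 1 + 2 * (E z / N z)) atTop (nhds (1 + 2 * b)) :=
    tendsto_const_nhds.add (hEN.const_mul 2)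
  have heq3 : (2 * b + 1) = 1 + 2 * b := by ring
  rw [heq3]
  apply hfinal.congr'
  filter_upwards [eventually_gt_atTop a] with z hz
  have hMz := hId z hz
  have hNz := hNpos z hz.le
  have hqz := hqpos z hz.le
  have : (∫ x in Set.Ioi z, 1 / q x) = M z := rfl
  have hN' : (∫ x in Set.Ioi z, 1 / q x ^ 3) = N z := rfl
  rw [this, hMz, hN']
  field_simp
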